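/- A connected finite simple graph G with at least one vertex is d₀-KP if and only if some nonempty induced subgraph of G is d₀-KP. -/

import Mathlib

open SimpleGraph Finset

/-- The induced subdigraph of `D` on `S` has a kernel: a `D`-independent set `I ⊆ S` such
that every vertex of `S` outside `I` sends an arc into `I`. -/
def HasKernelOn {V : Type*} (D : V → V → Prop) (S : Set V) : Prop :=
  ∃ I : Set V, I ⊆ S ∧
    (∀ u ∈ I, ∀ v ∈ I, u ≠ v → ¬ D u v) ∧
    ∀ v ∈ S, v ∉ I → ∃ u ∈ I, D v u

/-- A digraph `D` is kernel-perfect if every induced subdigraph has a kernel. -/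
def KernelPerfect {V : Type*} (D : V → V → Prop) : Prop :=
  ∀ S : Set V, HasKernelOn D S

/-- A graph `H` is `d₀`-KP if there is a kernel-perfect digraph `D` on `V(H)` such that
every edge of `H` carries at least one arc of `D` and `d_H(v) > d⁺_D(v)` for every
vertex `v`. -/
def IsD0KP {V : Type*} [Fintype V] (H : SimpleGraph V) : Prop :=
  ∃ D : V → V → Prop, (∀ v, ¬ D v v) ∧ KernelPerfect D ∧
    (∀ u v, H.Adj u v → D u v ∨ D v u) ∧
    ∀ v : V, Set.ncard {u | D v u} < Set.ncard {u | H.Adj v u}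

/-- Greedy independent set predicate, by well-founded recursion on `μ`. -/
def Good2 {V : Type*} (μ : V → ℕ) (A : V → V → Prop) (v : V) : Prop :=
  ∀ u, μ u < μ v → Good2 μ A u → ¬ A v u
termination_by μ v

lemma good2_def {V : Type*} (μ : V → ℕ) (A : V → V → Prop) (v : V) :
    Good2 μ A v ↔ ∀ u, μ u < μ v → Good2 μ A u → ¬ A v u := by
  rw [Good2]

lemma isD0KP_of_induced {V : Type*} [Fintype V] [DecidableEq V]
    (G : SimpleGraph V) (hconn : G.Connected) (s : Finset V) (hs : s.Nonempty)
    (h : IsD0KP (G.induce (s : Set V))) : IsD0KP G := by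
  classical
  obtain ⟨D, hirr, hkp, hcov, hdeg⟩ := h
  obtain ⟨a₀, ha₀⟩ := hs
  have ha₀' : a₀ ∈ (s : Set V) := by exact_mod_cast ha₀
  set rk : V → ℕ := fun v => G.dist v a₀ with hrkdef
  -- every vertex outside s has a neighbour strictly closer to a₀
  have hpar : ∀ v : V, ∃ w, v ∉ (s : Set V) → G.Adj v w ∧ rk w < rk v := by
    intro v
    by_cases hv : v ∈ (s : Set V)
    · exact ⟨a₀, fun h => absurd hv h⟩
    · have hne : v ≠ a₀ := fun h => hv (h ▸ ha₀')
      obtain ⟨pw, hpw⟩ := (hconn v a₀).exists_walk_length_eq_dist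
      cases pw with
      | nil => exact absurd rfl hne
      | @cons _ w _ hadj q =>
        refine ⟨w, fun _ => ⟨hadj, ?_⟩⟩
        have h1 : G.dist w a₀ ≤ q.length := dist_le q
        have h2 : q.length + 1 = G.dist v a₀ := by simpa using hpw
        have hpos : 0 < G.dist v a₀ :=
          (hconn v a₀).pos_dist_of_ne hne
        simp only [hrkdef]
        omega
  choose p hp using hpar
  -- an upper bound on rk
  have hrk_le : ∀ v, rk v < Fintype.card V := by
    intro v
    obtain ⟨w⟩ := hconn v a₀
    calc rk v ≤ w.bypass.length := dist_le w.bypass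
      _ < Fintype.card V := w.bypass_isPath.length_lt
  set K : ℕ := Fintype.card V + 1 with hK
  set idx : V → ℕ := fun v => ((Fintype.equivFin V) v : ℕ) with hidx
  have hidx_lt : ∀ v, idx v < K := by
    intro v
    have := ((Fintype.equivFin V) v).2
    simp only [hidx, hK]
    omega
  have hidx_inj : Function.Injective idx := by
    intro u v huv
    have := (Fintype.equivFin V).injective (Fin.ext huv)
    exact this
  set μ : V → ℕ := fun v => (K - rk v) * K + idx v with hμ
  have hμinj : Function.Injective μ := by
    intro u v huv
    apply hidx_inj
    have h1 : μ u % K = idx u % K := by show ((K - rk u) * K + idx u) % K = idx u % K; rw [Nat.mul_comm, Nat.mul_add_mod]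
    have h2 : μ v % K = idx v % K := by show ((K - rk v) * K + idx v) % K = idx v % K; rw [Nat.mul_comm, Nat.mul_add_mod]
    have := h1.symm.trans (huv ▸ h2)
    rwa [Nat.mod_eq_of_lt (hidx_lt u), Nat.mod_eq_of_lt (hidx_lt v)] at this
  have hμrk : ∀ u v, μ u < μ v → rk v ≤ rk u := by
    intro u v huv
    by_contra hc
    push_neg at hc
    have h1 : K - rk v + 1 ≤ K - rk u := by
      have := hrk_le u; have := hrk_le v; omega
    have h2 : (K - rk v + 1) * K ≤ (K - rk u) * K := Nat.mul_le_mul_right _ h1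
    have h3 : (K - rk v + 1) * K = (K - rk v) * K + K := by ring
    have h4 : μ v < (K - rk v) * K + K := by
      have := hidx_lt v
      simp only [hμ]
      omega
    have h5 : (K - rk u) * K ≤ μ u := Nat.le_add_right _ _
    omega
  -- the digraph on V
  set D' : V → V → Prop := fun a b =>
    (∃ ha : a ∈ (s : Set V), ∃ hb : b ∈ (s : Set V), D ⟨a, ha⟩ ⟨b, hb⟩) ∨
    (G.Adj a b ∧ (a ∉ (s : Set V) ∨ b ∉ (s : Set V)) ∧ (a ∉ (s : Set V) → b ≠ p a))
    with hD'
  refine ⟨D', ?_, ?_, ?_, ?_⟩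
  · -- irreflexive
    rintro v (⟨h1, h2, hD⟩ | ⟨hadj, _, _⟩)
    · exact hirr _ hD
    · exact G.loopless.irrefl v hadj
  · -- kernel perfect
    intro T
    set A : V → V → Prop := fun a b => G.Adj a b ∧ b ∈ T ∧ b ∉ (s : Set V) with hA
    set I₂ : Set V := {v | v ∈ T ∧ v ∉ (s : Set V) ∧ Good2 μ A v} with hI₂
    set S₁ : Set ((s : Set V) : Type _) :=
      {x | (x : V) ∈ T ∧ ∀ u ∈ I₂, ¬ G.Adj (x : V) u} with hS₁
    obtain ⟨I₁, hI₁S, hI₁ind, hI₁dom⟩ := hkp S₁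
    refine ⟨(Subtype.val '' I₁) ∪ I₂, ?_, ?_, ?_⟩
    · rintro v (⟨x, hx, rfl⟩ | hv)
      · exact (hI₁S hx).1
      · exact hv.1
    · -- independence
      rintro u (⟨x, hx, rfl⟩ | hu) v (⟨y, hy, rfl⟩ | hv) hne hD'uv
      · rcases hD'uv with ⟨h1, h2, hD⟩ | ⟨hadj, hor, _⟩
        · exact hI₁ind x hx y hy (fun hc => hne (congrArg Subtype.val hc)) hD
        · rcases hor with h | h
          · exact h x.2
          · exact h y.2
      · rcases hD'uv with ⟨h1, h2, hD⟩ | ⟨hadj, hor, _⟩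
        · exact hv.2.1 h2
        · exact (hI₁S hx).2 v hv hadj
      · rcases hD'uv with ⟨h1, h2, hD⟩ | ⟨hadj, hor, _⟩
        · exact hu.2.1 h1
        · exact (hI₁S hy).2 u hu hadj.symm
      · rcases hD'uv with ⟨h1, h2, hD⟩ | ⟨hadj, hor, _⟩
        · exact hu.2.1 h1
        · rcases lt_or_gt_of_ne (fun hc : μ u = μ v => hne (hμinj hc)) with hlt | hgt
          · exact (good2_def μ A v).1 hv.2.2 u hlt hu.2.2 ⟨hadj.symm, hu.1, hu.2.1⟩
          · exact (good2_def μ A u).1 hu.2.2 v hgt hv.2.2 ⟨hadj, hv.1, hv.2.1⟩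
    · -- domination
      intro v hvT hvI
      by_cases hvs : v ∈ (s : Set V)
      · by_cases hex : ∃ u ∈ I₂, G.Adj v u
        · obtain ⟨u, hu, hadj⟩ := hex
          exact ⟨u, Or.inr hu, Or.inr ⟨hadj, Or.inr hu.2.1, fun hc _ => absurd hvs hc⟩⟩
        · push_neg at hex
          have hxS : (⟨v, hvs⟩ : (s : Set V)) ∈ S₁ := ⟨hvT, hex⟩
          have hxI : (⟨v, hvs⟩ : (s : Set V)) ∉ I₁ := by
            intro hc
            exact hvI (Or.inl ⟨_, hc, rfl⟩)
          obtain ⟨y, hy, hDxy⟩ := hI₁dom _ hxS hxI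
          exact ⟨y, Or.inl ⟨y, hy, rfl⟩, Or.inl ⟨hvs, y.2, hDxy⟩⟩
      · have hng : ¬ Good2 μ A v := by
          intro hg
          exact hvI (Or.inr ⟨hvT, hvs, hg⟩)
        rw [good2_def] at hng
        push_neg at hng
        obtain ⟨u, hμlt, hgu, hadj, huT, hus⟩ := hng
        have huI₂ : u ∈ I₂ := ⟨huT, hus, hgu⟩
        have hrk1 : rk v ≤ rk u := hμrk _ _ hμlt
        have hne : u ≠ p v := by
          intro hc
          have := (hp v hvs).2
          rw [← hc] at this
          omega
        exact ⟨u, Or.inr huI₂, Or.inr ⟨hadj, Or.inl hvs, fun _ => hne⟩⟩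
  · -- coverage
    intro u v hadj
    by_cases hu : u ∈ (s : Set V) <;> by_cases hv : v ∈ (s : Set V)
    · rcases hcov ⟨u, hu⟩ ⟨v, hv⟩ hadj with hD | hD
      · exact Or.inl (Or.inl ⟨hu, hv, hD⟩)
      · exact Or.inr (Or.inl ⟨hv, hu, hD⟩)
    · exact Or.inl (Or.inr ⟨hadj, Or.inr hv, fun hc _ => absurd hu hc⟩)
    · exact Or.inr (Or.inr ⟨hadj.symm, Or.inr hu, fun hc _ => absurd hv hc⟩)
    · by_cases hvp : v = p u
      · refine Or.inr (Or.inr ⟨hadj.symm, Or.inr hu, fun _ hc => ?_⟩)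
        have h1 := (hp u hu).2
        have h2 := (hp v hv).2
        rw [← hvp] at h1
        rw [← hc] at h2
        omega
      · exact Or.inl (Or.inr ⟨hadj, Or.inl hu, fun _ => hvp⟩)
  · -- out-degrees
    intro v
    by_cases hvs : v ∈ (s : Set V)
    · have hOut : {u | D' v u} =
          (Subtype.val '' {x : ((s : Set V) : Type _) | D ⟨v, hvs⟩ x}) ∪
          {u | G.Adj v u ∧ u ∉ (s : Set V)} := by
        ext u
        simp only [hD', Set.mem_setOf_eq, Set.mem_union, Set.mem_image]
        constructor
        · rintro (⟨h1, h2, hD⟩ | ⟨hadj, hor, _⟩)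
          · exact Or.inl ⟨⟨u, h2⟩, hD, rfl⟩
          · exact Or.inr ⟨hadj, hor.resolve_left (fun hc => hc hvs)⟩
        · rintro (⟨x, hx, rfl⟩ | ⟨hadj, hus⟩)
          · exact Or.inl ⟨hvs, x.2, hx⟩
          · exact Or.inr ⟨hadj, Or.inr hus, fun hc _ => absurd hvs hc⟩
      have hAdj : {u | G.Adj v u} =
          (Subtype.val '' {x : ((s : Set V) : Type _) | G.Adj v x}) ∪
          {u | G.Adj v u ∧ u ∉ (s : Set V)} := by
        ext u
        simp only [Set.mem_setOf_eq, Set.mem_union, Set.mem_image]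
        constructor
        · intro hadj
          by_cases hus : u ∈ (s : Set V)
          · exact Or.inl ⟨⟨u, hus⟩, hadj, rfl⟩
          · exact Or.inr ⟨hadj, hus⟩
        · rintro (⟨x, hx, rfl⟩ | ⟨hadj, _⟩)
          · exact hx
          · exact hadj
      have hd1 : Disjoint (Subtype.val '' {x : ((s : Set V) : Type _) | D ⟨v, hvs⟩ x})
          {u | G.Adj v u ∧ u ∉ (s : Set V)} := by
        rw [Set.disjoint_left]
        rintro a ⟨x, hx, rfl⟩ ⟨_, hns⟩
        exact hns x.2
      have hd2 : Disjoint (Subtype.val '' {x : ((s : Set V) : Type _) | G.Adj v x})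
          {u | G.Adj v u ∧ u ∉ (s : Set V)} := by
        rw [Set.disjoint_left]
        rintro a ⟨x, hx, rfl⟩ ⟨_, hns⟩
        exact hns x.2
      rw [hOut, hAdj, Set.ncard_union_eq hd1 (Set.toFinite _) (Set.toFinite _),
        Set.ncard_union_eq hd2 (Set.toFinite _) (Set.toFinite _)]
      apply Nat.add_lt_add_right
      rw [Set.ncard_image_of_injective _ Subtype.val_injective,
        Set.ncard_image_of_injective _ Subtype.val_injective]
      exact hdeg ⟨v, hvs⟩
    · have hOut : {u | D' v u} = {u | G.Adj v u} \ {p v} := by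
        ext u
        simp only [hD', Set.mem_setOf_eq, Set.mem_diff, Set.mem_singleton_iff]
        constructor
        · rintro (⟨h1, _⟩ | ⟨hadj, _, hcond⟩)
          · exact absurd h1 hvs
          · exact ⟨hadj, hcond hvs⟩
        · rintro ⟨hadj, hne⟩
          exact Or.inr ⟨hadj, Or.inl hvs, fun _ => hne⟩
      rw [hOut]
      exact Set.ncard_diff_singleton_lt_of_mem (hp v hvs).1 (Set.toFinite _)

lemma isD0KP_of_iso {V W : Type*} [Fintype V] [Fintype W] {G : SimpleGraph V}
    {H : SimpleGraph W} (e : G ≃g H) (h : IsD0KP H) : IsD0KP G := by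
  obtain ⟨D, hirr, hkp, hcov, hdeg⟩ := h
  refine ⟨fun a b => D (e a) (e b), fun v => hirr _, ?_, ?_, ?_⟩
  · intro S
    obtain ⟨I, hIS, hind, hdom⟩ := hkp (e.toEquiv '' S)
    refine ⟨e.toEquiv ⁻¹' I, ?_, ?_, ?_⟩
    · intro a ha
      obtain ⟨b, hb, hbe⟩ := hIS ha
      rwa [← e.toEquiv.injective hbe]
    · intro a ha b hb hab
      exact hind _ ha _ hb (fun hc => hab (e.toEquiv.injective hc))
    · intro a haS haI
      obtain ⟨u, huI, hDu⟩ := hdom (e a) ⟨a, haS, rfl⟩ haI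
      obtain ⟨b, hbS, rfl⟩ := hIS huI
      exact ⟨b, huI, hDu⟩
  · intro a b hab
    exact hcov _ _ (e.map_adj_iff.2 hab)
  · intro v
    have h1 : {u | D (e v) (e u)} = e.toEquiv ⁻¹' {u | D (e v) u} := rfl
    have h2 : {u | G.Adj v u} = e.toEquiv ⁻¹' {u | H.Adj (e v) u} := by
      ext u; simp [e.map_adj_iff]
    rw [h1, h2, Set.ncard_preimage_of_injective_subset_range,
      Set.ncard_preimage_of_injective_subset_range]
    · exact hdeg (e v)
    all_goals first
      | exact e.toEquiv.injective
      | (intro x hx; exact ⟨e.toEquiv.symm x, by simp⟩)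


/-- A connected nonempty graph `G` is `d₀`-KP if and only if some nonempty induced
subgraph of `G` is `d₀`-KP. -/
theorem d0KP_iff_induced {V : Type*} [Fintype V] [DecidableEq V] [Nonempty V]
    (G : SimpleGraph V) (hconn : G.Connected) :
    IsD0KP G ↔ ∃ s : Finset V, s.Nonempty ∧ IsD0KP (G.induce (s : Set V)) := by
  constructor
  · intro h
    refine ⟨Finset.univ, Finset.univ_nonempty, ?_⟩
    have e : G.induce ((Finset.univ : Finset V) : Set V) ≃g G :=
      ⟨Equiv.subtypeUnivEquiv (by simp), Iff.rfl⟩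
    exact isD0KP_of_iso e h
  · rintro ⟨s, hs, h⟩
    exact isD0KP_of_induced G hconn s hs h
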